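/- Let Γ = ⟨α_1, …, α_k⟩ ⊂ ℕ^d be an affine semigroup, 𝕂 a field, and let G be a reduced Gröbner basis of the defining ideal I_{Γ_H} ⊂ 𝕂[t, y_1, …, y_k] of Γ_H with respect to a lexicographic monomial order in which t is greater than every y_i. For j ≥ 0 let J_j = ⟨y^z − y^w : t^i y^z − y^w ∈ G for some i ≤ j⟩. Then J_j equals the ideal I_j = ⟨y^z − y^w : φ_Γ(z) = φ_Γ(w) and ||z| − |w|| ≤ j⟩ for every j ≥ 0. -/

import Mathlib

open Finset

/-- The factorization homomorphism `φ_Γ : ℕ^k → ℕ^d` determined by the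
generators `α 1, …, α k`. -/
def phi {d k : ℕ} (α : Fin k → Fin d → ℕ) (z : Fin k → ℕ) : Fin d → ℕ :=
  ∑ i, z i • α i

/-- The length `|z|` of a factorization. -/
def len {k : ℕ} (z : Fin k → ℕ) : ℕ := ∑ i, z i

/-- The length set `L_Γ(γ)`. -/
def lengthSet {d k : ℕ} (α : Fin k → Fin d → ℕ) (γ : Fin d → ℕ) : Set ℕ :=
  len '' {z | phi α z = γ}

/-- The set of successive differences (gaps) of a set of naturals. -/
def deltaOf (L : Set ℕ) : Set ℕ :=
  {δ | 0 < δ ∧ ∃ a, a ∈ L ∧ a + δ ∈ L ∧ ∀ c ∈ L, ¬(a < c ∧ c < a + δ)}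

/-- The delta set `Δ(Γ)` of the affine semigroup generated by `α`. -/
def deltaSet {d k : ℕ} (α : Fin k → Fin d → ℕ) : Set ℕ :=
  ⋃ γ ∈ Set.range (phi α), deltaOf (lengthSet α γ)

/-- The monomial `y^z = y_1^{z_1} ⋯ y_k^{z_k}` in `𝕂[y_1,…,y_k]`. -/
noncomputable def monoY (𝕂 : Type*) [CommSemiring 𝕂] {k : ℕ} (z : Fin k → ℕ) :
    MvPolynomial (Fin k) 𝕂 :=
  MvPolynomial.monomial (Finsupp.equivFunOnFinite.symm z) 1

/-- The ideal `I_j = ⟨y^z − y^w : φ_Γ(z) = φ_Γ(w), ||z|−|w|| ≤ j⟩`. -/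
noncomputable def idealI (𝕂 : Type*) [Field 𝕂] {d k : ℕ} (α : Fin k → Fin d → ℕ)
    (j : ℕ) : Ideal (MvPolynomial (Fin k) 𝕂) :=
  Ideal.span {f | ∃ z w : Fin k → ℕ, phi α z = phi α w ∧
    Nat.dist (len z) (len w) ≤ j ∧ f = monoY 𝕂 z - monoY 𝕂 w}

/-! We work in `𝕂[t, y_1, …, y_k] = MvPolynomial (Fin (k+1)) 𝕂`, where the
variable indexed by `0` is `t` and the variable indexed by `i+1` is `y_i`.
The lexicographic order on exponent vectors `Fin (k+1) →₀ ℕ` (via `Finsupp.Lex`,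
comparing the exponent of `t` first) is then a lexicographic monomial order in
which `t` is greater than every `y_i`. -/

/-- The exponent vector of the monomial `t^i y^z`. -/
noncomputable def expTY {k : ℕ} (i : ℕ) (z : Fin k → ℕ) : Fin (k + 1) →₀ ℕ :=
  Finsupp.equivFunOnFinite.symm (Fin.cons i z)

/-- The monomial `t^i y^z` in `𝕂[t, y_1, …, y_k]`. -/
noncomputable def monoT (𝕂 : Type*) [CommSemiring 𝕂] {k : ℕ} (i : ℕ) (z : Fin k → ℕ) :
    MvPolynomial (Fin (k + 1)) 𝕂 :=
  MvPolynomial.monomial (expTY i z) 1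

/-- The leading (initial) exponent of `f` with respect to the lexicographic
order with `t` greatest. -/
noncomputable def leadExp {𝕂 : Type*} [CommSemiring 𝕂] {k : ℕ}
    (f : MvPolynomial (Fin (k + 1)) 𝕂) : Fin (k + 1) →₀ ℕ :=
  ofLex (f.support.sup toLex)

/-- The initial term of `f` with respect to the lexicographic order with `t`
greatest. -/
noncomputable def initTerm {𝕂 : Type*} [CommSemiring 𝕂] {k : ℕ}
    (f : MvPolynomial (Fin (k + 1)) 𝕂) : MvPolynomial (Fin (k + 1)) 𝕂 :=
  MvPolynomial.monomial (leadExp f) (MvPolynomial.coeff (leadExp f) f)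

/-- `G` is a Gröbner basis of `I` (w.r.t. the lex order with `t` greatest):
`G` generates `I` and the initial terms of elements of `G` generate the ideal
generated by the initial terms of all nonzero elements of `I`. -/
def IsGroebnerBasis {𝕂 : Type*} [Field 𝕂] {k : ℕ}
    (I : Ideal (MvPolynomial (Fin (k + 1)) 𝕂))
    (G : Set (MvPolynomial (Fin (k + 1)) 𝕂)) : Prop :=
  G ⊆ (I : Set (MvPolynomial (Fin (k + 1)) 𝕂)) ∧ Ideal.span G = I ∧
    Ideal.span (initTerm '' G) = Ideal.span (initTerm '' {f | f ∈ I ∧ f ≠ 0})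

/-- `G` is reduced: every element is monic and no monomial occurring in an
element of `G` is divisible by the initial monomial of a different element. -/
def IsReducedGB {𝕂 : Type*} [Field 𝕂] {k : ℕ}
    (G : Set (MvPolynomial (Fin (k + 1)) 𝕂)) : Prop :=
  (∀ g ∈ G, MvPolynomial.coeff (leadExp g) g = 1) ∧
    ∀ g ∈ G, ∀ g' ∈ G, g' ≠ g → ∀ m ∈ g.support, ¬ leadExp g' ≤ m

/-- The defining ideal `I_{Γ_H}` of
`Γ_H = ⟨(1,0), (1,α_1), …, (1,α_k)⟩ ⊂ ℕ^{1+d}`, namely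
`⟨t^{|w|−|z|} y^z − y^w : φ_Γ(z) = φ_Γ(w), |z| ≤ |w|⟩`. -/
noncomputable def idealGH (𝕂 : Type*) [Field 𝕂] {d k : ℕ}
    (α : Fin k → Fin d → ℕ) : Ideal (MvPolynomial (Fin (k + 1)) 𝕂) :=
  Ideal.span {f | ∃ z w : Fin k → ℕ, phi α z = phi α w ∧ len z ≤ len w ∧
    f = monoT 𝕂 (len w - len z) z - monoT 𝕂 0 w}

open Finset MvPolynomial

section Aux
variable {𝕂 : Type*} [Field 𝕂] {d k : ℕ} (α : Fin k → Fin d → ℕ)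

lemma expTY_apply (i : ℕ) (z : Fin k → ℕ) (m : Fin (k+1)) :
    expTY i z m = (Fin.cons i z : Fin (k+1) → ℕ) m := rfl

lemma expTY_add (i i' : ℕ) (z z' : Fin k → ℕ) :
    expTY i z + expTY i' z' = expTY (i + i') (z + z') := by
  ext m
  rw [Finsupp.add_apply, expTY_apply, expTY_apply, expTY_apply]
  induction m using Fin.cases <;> simp

lemma expTY_eta (e : Fin (k+1) →₀ ℕ) : expTY (e 0) (fun m => e m.succ) = e := by
  ext m
  rw [expTY_apply]
  induction m using Fin.cases <;> simp

lemma monoT_mul (i i' : ℕ) (z z' : Fin k → ℕ) :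
    monoT 𝕂 i z * monoT 𝕂 i' z' = monoT 𝕂 (i + i') (z + z') := by
  simp [monoT, MvPolynomial.monomial_mul, expTY_add]

lemma symm_add (a b : Fin k → ℕ) :
    Finsupp.equivFunOnFinite.symm (a + b)
      = Finsupp.equivFunOnFinite.symm a + Finsupp.equivFunOnFinite.symm b := by
  ext m; simp

lemma monoY_mul (z z' : Fin k → ℕ) :
    monoY 𝕂 z * monoY 𝕂 z' = monoY 𝕂 (z + z') := by
  simp [monoY, MvPolynomial.monomial_mul, symm_add]

lemma phi_add (a b : Fin k → ℕ) : phi α (a + b) = phi α a + phi α b := by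
  unfold phi
  simp [add_smul, Finset.sum_add_distrib]

lemma len_add (a b : Fin k → ℕ) : len (a + b) = len a + len b := by
  unfold len; simp [Finset.sum_add_distrib]

/-- The exponent-level homomorphism underlying `Γ_H`. -/
def psiE : (Fin (k+1) →₀ ℕ) →+ (ℕ × (Fin d → ℕ)) where
  toFun e := (∑ m, e m, ∑ m : Fin k, e m.succ • α m)
  map_zero' := by simp
  map_add' x y := by
    simp [Finsupp.add_apply, Finset.sum_add_distrib, add_smul, Prod.ext_iff]

lemma psiE_expTY (i : ℕ) (z : Fin k → ℕ) :
    psiE α (expTY i z) = (i + len z, phi α z) := by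
  have h1 : ∑ m : Fin (k+1), (expTY i z) m = i + len z := by
    simp only [expTY_apply]; rw [len]; exact Fin.sum_cons i z
  have h2 : ∑ m : Fin k, (expTY i z) m.succ • α m = phi α z := by
    simp only [expTY_apply, Fin.cons_succ]; rfl
  simp only [psiE, AddMonoidHom.coe_mk, ZeroHom.coe_mk, h1, h2]

/-- The homomorphism `𝕂[t,y] → 𝕂[Γ_H]`. -/
noncomputable def psi : MvPolynomial (Fin (k+1)) 𝕂 →+* AddMonoidAlgebra 𝕂 (ℕ × (Fin d → ℕ)) :=
  AddMonoidAlgebra.mapDomainRingHom 𝕂 (psiE α)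

lemma psi_monomial (e : Fin (k+1) →₀ ℕ) (c : 𝕂) :
    psi α (MvPolynomial.monomial e c) = AddMonoidAlgebra.single (psiE α e) c := by
  rw [psi, ← MvPolynomial.single_eq_monomial]
  exact AddMonoidAlgebra.mapDomain_single

end Aux
section Aux2
open MvPolynomial
variable {𝕂 : Type*} [Field 𝕂] {d k : ℕ} (α : Fin k → Fin d → ℕ)

lemma psi_idealGH {p : MvPolynomial (Fin (k+1)) 𝕂} (hp : p ∈ idealGH 𝕂 α) :
    psi α p = 0 := by
  have hle : idealGH 𝕂 α ≤ RingHom.ker (psi α) := by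
    rw [idealGH, Ideal.span_le]
    rintro f ⟨z, w, hphi, hlen, rfl⟩
    simp only [SetLike.mem_coe, RingHom.mem_ker, monoT, map_sub, psi_monomial, sub_eq_zero]
    congr 1
    rw [psiE_expTY, psiE_expTY, hphi]
    congr 1
    omega
  exact hle hp

lemma leadExp_mem {f : MvPolynomial (Fin (k+1)) 𝕂} (hf : f ≠ 0) :
    leadExp f ∈ f.support := by
  obtain ⟨b, hb, he⟩ := Finset.exists_mem_eq_sup f.support
    (MvPolynomial.support_nonempty.mpr hf) toLex
  rw [leadExp, he]
  exact hb

lemma coeff_leadExp_ne_zero {f : MvPolynomial (Fin (k+1)) 𝕂} (hf : f ≠ 0) :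
    MvPolynomial.coeff (leadExp f) f ≠ 0 :=
  MvPolynomial.mem_support_iff.mp (leadExp_mem hf)

lemma toLex_le_leadExp {f : MvPolynomial (Fin (k+1)) 𝕂} {m : Fin (k+1) →₀ ℕ}
    (hm : m ∈ f.support) : toLex m ≤ toLex (leadExp f) :=
  Finset.le_sup hm

lemma binom_coeff {e0 e1 m : Fin (k+1) →₀ ℕ} (h : e0 ≠ e1) :
    MvPolynomial.coeff m (MvPolynomial.monomial e0 (1:𝕂) - MvPolynomial.monomial e1 1)
      = if m = e0 then 1 else if m = e1 then -1 else 0 := by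
  rw [MvPolynomial.coeff_sub, MvPolynomial.coeff_monomial, MvPolynomial.coeff_monomial]
  by_cases h1 : m = e0
  · subst h1
    rw [if_pos rfl, if_pos rfl, if_neg (fun hh => h hh.symm)]
    ring
  · rw [if_neg (fun hh => h1 hh.symm), if_neg h1]
    by_cases h2 : m = e1
    · subst h2
      rw [if_pos rfl, if_pos rfl]
      ring
    · rw [if_neg (fun hh => h2 hh.symm), if_neg h2]
      ring

lemma binom_ne_zero {e0 e1 : Fin (k+1) →₀ ℕ} (h : e0 ≠ e1) :
    (MvPolynomial.monomial e0 (1:𝕂) - MvPolynomial.monomial e1 1) ≠ 0 := by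
  intro h0
  have := binom_coeff (𝕂 := 𝕂) (m := e0) h
  rw [h0, if_pos rfl] at this
  simp at this

lemma binom_support {e0 e1 : Fin (k+1) →₀ ℕ} (h : e0 ≠ e1) :
    (MvPolynomial.monomial e0 (1:𝕂) - MvPolynomial.monomial e1 1).support = {e0, e1} := by
  ext m
  rw [MvPolynomial.mem_support_iff, binom_coeff h, Finset.mem_insert, Finset.mem_singleton]
  split_ifs with h1 h2 <;> simp_all

lemma binom_leadExp {e0 e1 : Fin (k+1) →₀ ℕ} (h : toLex e1 < toLex e0) :
    leadExp (MvPolynomial.monomial e0 (1:𝕂) - MvPolynomial.monomial e1 1) = e0 := by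
  have hne : e0 ≠ e1 := fun he => absurd (he ▸ h) (lt_irrefl _)
  rw [leadExp]
  have : (MvPolynomial.monomial e0 (1:𝕂) - MvPolynomial.monomial e1 1).support = {e0, e1} :=
    binom_support hne
  rw [this]
  rw [Finset.sup_insert, Finset.sup_singleton]
  exact congrArg ofLex (sup_eq_left.mpr h.le)

end Aux2
section Aux3
open MvPolynomial
variable {𝕂 : Type*} [Field 𝕂] {d k : ℕ} {α : Fin k → Fin d → ℕ}
variable {G : Set (MvPolynomial (Fin (k + 1)) 𝕂)}

lemma exists_fiber {p : MvPolynomial (Fin (k+1)) 𝕂} (hp : psi α p = 0)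
    {e0 : Fin (k+1) →₀ ℕ} (he0 : e0 ∈ p.support) :
    ∃ e1 ∈ p.support, e1 ≠ e0 ∧ psiE α e1 = psiE α e0 := by
  by_contra hcon
  push_neg at hcon
  have hp' : Finsupp.mapDomain (psiE α) (AddMonoidAlgebra.coeff p) = 0 := by
    rw [psi] at hp
    exact congrArg AddMonoidAlgebra.coeff hp
  have h0 : (Finsupp.mapDomain (psiE α) (AddMonoidAlgebra.coeff p)) (psiE α e0) = 0 := by rw [hp']; rfl
  have he0' : e0 ∈ Finsupp.support (AddMonoidAlgebra.coeff p) := he0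
  rw [Finsupp.mapDomain, Finsupp.sum_apply, Finsupp.sum,
    Finset.sum_eq_single_of_mem e0 he0' (fun b hb hbne => by
      rw [Finsupp.single_apply, if_neg (fun hh => (hcon b hb hbne) hh)]),
    Finsupp.single_eq_same] at h0
  exact MvPolynomial.mem_support_iff.mp he0 h0

lemma exists_div (hGB : IsGroebnerBasis (idealGH 𝕂 α) G) (hred : IsReducedGB G)
    {f : MvPolynomial (Fin (k+1)) 𝕂} (hf : f ∈ idealGH 𝕂 α) (hf0 : f ≠ 0) :
    ∃ g ∈ G, leadExp g ≤ leadExp f := by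
  have h1 : initTerm f ∈ Ideal.span (initTerm '' {h | h ∈ idealGH 𝕂 α ∧ h ≠ 0}) :=
    Ideal.subset_span ⟨f, ⟨hf, hf0⟩, rfl⟩
  rw [← hGB.2.2] at h1
  have himg : initTerm '' G
      = (fun s => MvPolynomial.monomial s (1:𝕂)) '' (leadExp '' G) := by
    rw [Set.image_image]
    exact Set.image_congr fun g hg => by rw [initTerm, hred.1 g hg]
  rw [himg, MvPolynomial.mem_ideal_span_monomial_image] at h1
  obtain ⟨s, hs, hle⟩ := h1 (leadExp f) (by
    rw [initTerm, MvPolynomial.mem_support_iff, MvPolynomial.coeff_monomial, if_pos rfl]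
    exact coeff_leadExp_ne_zero hf0)
  obtain ⟨g, hgG, rfl⟩ := hs
  exact ⟨g, hgG, hle⟩

end Aux3
section Aux4
open MvPolynomial
variable {𝕂 : Type*} [Field 𝕂] {d k : ℕ} {α : Fin k → Fin d → ℕ}
variable {G : Set (MvPolynomial (Fin (k + 1)) 𝕂)}

lemma struct (hGB : IsGroebnerBasis (idealGH 𝕂 α) G) (hred : IsReducedGB G)
    {g : MvPolynomial (Fin (k+1)) 𝕂} (hg : g ∈ G) :
    ∃ a u v, g = monoT 𝕂 a u - monoT 𝕂 0 v ∧ phi α u = phi α v ∧ a + len u = len v ∧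
      leadExp g = expTY a u ∧ toLex (expTY 0 v) < toLex (expTY a u) := by
  have hmonic := hred.1 g hg
  have hgI : g ∈ idealGH 𝕂 α := hGB.1 hg
  have hg0 : g ≠ 0 := by
    intro h; rw [h, MvPolynomial.coeff_zero] at hmonic; exact zero_ne_one hmonic
  have he0 : leadExp g ∈ g.support := leadExp_mem hg0
  obtain ⟨e1, he1, he1ne, hfib⟩ := exists_fiber (psi_idealGH α hgI) he0
  have hlt10 : toLex e1 < toLex (leadExp g) :=
    lt_of_le_of_ne (toLex_le_leadExp he1) (fun hh => he1ne (toLex.injective hh))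
  obtain ⟨a, u, he0e⟩ : ∃ a u, leadExp g = expTY a u := ⟨_, _, (expTY_eta _).symm⟩
  obtain ⟨b', v, he1e⟩ : ∃ b v, e1 = expTY b v := ⟨_, _, (expTY_eta _).symm⟩
  have hrel : b' + len v = a + len u ∧ phi α v = phi α u := by
    have h := hfib
    rw [he0e, he1e, psiE_expTY, psiE_expTY, Prod.mk.injEq] at h
    exact h
  have hb'a : b' ≤ a := by
    by_contra hcon
    push_neg at hcon
    have hablt : (expTY a u) 0 < (expTY b' v) 0 := by
      rw [expTY_apply, expTY_apply]; simpa using hcon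
    have : toLex (leadExp g) < toLex e1 := by
      rw [he0e, he1e]
      exact Finsupp.Lex.lt_iff.mpr ⟨0,
        (fun j hj => by simp [Fin.lt_def] at hj), hablt⟩
    exact absurd this (asymm hlt10)
  have hluv : len u ≤ len v := by omega
  have hgen : monoT 𝕂 (len v - len u) u - monoT 𝕂 0 v ∈ idealGH 𝕂 α :=
    Ideal.subset_span ⟨u, v, hrel.2.symm, hluv, rfl⟩
  have hBfact : (MvPolynomial.monomial (leadExp g) (1:𝕂) - MvPolynomial.monomial e1 1)
      = monoT 𝕂 b' 0 * (monoT 𝕂 (len v - len u) u - monoT 𝕂 0 v) := by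
    rw [mul_sub, monoT_mul, monoT_mul]
    have h1 : b' + (len v - len u) = a := by omega
    have h2 : b' + 0 = b' := by omega
    rw [h1, h2, zero_add, zero_add, he0e, he1e]
    rfl
  have hBI : (MvPolynomial.monomial (leadExp g) (1:𝕂) - MvPolynomial.monomial e1 1)
      ∈ idealGH 𝕂 α := by
    rw [hBfact]; exact Ideal.mul_mem_left _ _ hgen
  have hgB : g = MvPolynomial.monomial (leadExp g) (1:𝕂) - MvPolynomial.monomial e1 1 := by
    by_contra hne
    have hsub0 : g - (MvPolynomial.monomial (leadExp g) (1:𝕂) - MvPolynomial.monomial e1 1) ≠ 0 :=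
      sub_ne_zero.mpr hne
    obtain ⟨g', hg', hle⟩ := exists_div hGB hred (Ideal.sub_mem _ hgI hBI) hsub0
    have hmsup := leadExp_mem hsub0
    have hmne0 : leadExp (g - (MvPolynomial.monomial (leadExp g) (1:𝕂)
        - MvPolynomial.monomial e1 1)) ≠ leadExp g := by
      intro hh
      apply MvPolynomial.mem_support_iff.mp hmsup
      rw [hh, MvPolynomial.coeff_sub, hmonic,
        binom_coeff (fun hh2 => he1ne hh2.symm), if_pos rfl]
      ring
    have hmg : leadExp (g - (MvPolynomial.monomial (leadExp g) (1:𝕂)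
        - MvPolynomial.monomial e1 1)) ∈ g.support := by
      by_contra hmgn
      rw [MvPolynomial.notMem_support_iff] at hmgn
      have hm1 : leadExp (g - (MvPolynomial.monomial (leadExp g) (1:𝕂)
          - MvPolynomial.monomial e1 1)) ≠ e1 := by
        intro hh
        exact (MvPolynomial.mem_support_iff.mp he1) (hh ▸ hmgn)
      apply MvPolynomial.mem_support_iff.mp hmsup
      rw [MvPolynomial.coeff_sub, hmgn, binom_coeff (fun hh2 => he1ne hh2.symm),
        if_neg hmne0, if_neg hm1]
      ring
    by_cases hgg : g' = g
    · rw [hgg] at hle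
      have h1 := Finsupp.toLex_monotone hle
      have h2 := toLex_le_leadExp hmg
      exact hmne0 (toLex.injective (le_antisymm h2 h1))
    · exact hred.2 g hg g' hg' hgg _ hmg hle
  -- now prove b' = 0
  have hshift0 : expTY (a - b') u + expTY b' (0 : Fin k → ℕ) = leadExp g := by
    rw [expTY_add, he0e]
    have h : a - b' + b' = a := by omega
    rw [h, add_zero]
  have hshift1 : expTY 0 v + expTY b' (0 : Fin k → ℕ) = e1 := by
    rw [expTY_add, he1e, Nat.zero_add, add_zero]
  have hlt' : toLex (expTY 0 v) < toLex (expTY (a - b') u) := by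
    have h : toLex (expTY 0 v + expTY b' (0 : Fin k → ℕ))
        < toLex (expTY (a - b') u + expTY b' (0 : Fin k → ℕ)) := by
      rw [hshift0, hshift1]; exact hlt10
    rw [toLex_add, toLex_add] at h
    exact lt_of_add_lt_add_right h
  have he0'ne : expTY (a - b') u ≠ expTY 0 v := fun hh => absurd (hh ▸ hlt') (lt_irrefl _)
  have hB'I : (MvPolynomial.monomial (expTY (a - b') u) (1:𝕂)
      - MvPolynomial.monomial (expTY 0 v) 1) ∈ idealGH 𝕂 α := by
    have h : expTY (a - b') u = expTY (len v - len u) u := by congr 1; omega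
    rw [h]
    exact hgen
  obtain ⟨g'', hg'', hle''⟩ := exists_div hGB hred hB'I (binom_ne_zero he0'ne)
  rw [binom_leadExp hlt'] at hle''
  have he0'le : expTY (a - b') u ≤ leadExp g := by
    rw [Finsupp.le_def]
    intro m
    rw [he0e, expTY_apply, expTY_apply]
    induction m using Fin.cases
    · simpa using Nat.sub_le a b'
    · simp
  have hb'0 : b' = 0 := by
    by_cases hgg : g'' = g
    · subst hgg
      rw [he0e] at hle''
      have heq : expTY (a - b') u = expTY a u := le_antisymm (he0e ▸ he0'le) hle''
      have h0 := DFunLike.congr_fun heq (0 : Fin (k+1))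
      rw [expTY_apply, expTY_apply] at h0
      simp only [Fin.cons_zero] at h0
      omega
    · exact absurd (hle''.trans he0'le) (hred.2 g hg g'' hg'' hgg _ he0)
  refine ⟨a, u, v, ?_, hrel.2.symm, by omega, he0e, ?_⟩
  · rw [hgB, he0e, he1e, hb'0]
    rfl
  · rw [he0e, he1e, hb'0] at hlt10
    exact hlt10
end Aux4
section Aux5
open MvPolynomial

lemma leadExp_neg {𝕂 : Type*} [Field 𝕂] {k : ℕ} (f : MvPolynomial (Fin (k+1)) 𝕂) :
    leadExp (-f) = leadExp f := by
  rw [leadExp, leadExp, MvPolynomial.support_neg]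

/-- The ideal `J_j`. -/
noncomputable def idealJ (𝕂 : Type*) [Field 𝕂] {k : ℕ}
    (G : Set (MvPolynomial (Fin (k + 1)) 𝕂)) (j : ℕ) : Ideal (MvPolynomial (Fin k) 𝕂) :=
  Ideal.span {f : MvPolynomial (Fin k) 𝕂 | ∃ z w : Fin k → ℕ, ∃ i ≤ j,
    monoT 𝕂 i z - monoT 𝕂 0 w ∈ G ∧ f = monoY 𝕂 z - monoY 𝕂 w}

variable {𝕂 : Type*} [Field 𝕂] {d k : ℕ} {α : Fin k → Fin d → ℕ}
variable {G : Set (MvPolynomial (Fin (k + 1)) 𝕂)}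

lemma key (hGB : IsGroebnerBasis (idealGH 𝕂 α) G) (hred : IsReducedGB G) (j : ℕ) :
    ∀ (μ : Lex (Fin (k+1) →₀ ℕ)) (i : ℕ) (z w : Fin k → ℕ),
      max (toLex (expTY i z)) (toLex (expTY 0 w)) ≤ μ →
      phi α z = phi α w → len z + i = len w → i ≤ j →
      monoY 𝕂 z - monoY 𝕂 w ∈ idealJ 𝕂 G j := by
  have wfi : WellFoundedLT (Lex (Fin (k + 1) →₀ ℕ)) := Finsupp.Lex.wellFoundedLT_of_finite
  intro μ
  refine wfi.wf.induction (C := fun μ => ∀ (i : ℕ) (z w : Fin k → ℕ),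
      max (toLex (expTY i z)) (toLex (expTY 0 w)) ≤ μ →
      phi α z = phi α w → len z + i = len w → i ≤ j →
      monoY 𝕂 z - monoY 𝕂 w ∈ idealJ 𝕂 G j) μ ?_
  intro ν IH i z w hμ hphi hlen hij
  by_cases hzw : expTY i z = expTY 0 w
  · have hz : z = w := by
      funext m
      have h := DFunLike.congr_fun hzw m.succ
      rw [expTY_apply, expTY_apply] at h
      simpa using h
    rw [hz, sub_self]
    exact zero_mem _
  have hne01 : toLex (expTY i z) ≠ toLex (expTY 0 w) := fun h => hzw (toLex.injective h)
  have hfI : monoT 𝕂 i z - monoT 𝕂 0 w ∈ idealGH 𝕂 α := by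
    have hiz : i = len w - len z := by omega
    rw [hiz]
    exact Ideal.subset_span ⟨z, w, hphi, by omega, rfl⟩
  have hf0 : monoT 𝕂 i z - monoT 𝕂 0 w ≠ 0 := binom_ne_zero hzw
  obtain ⟨g, hgG, hgle⟩ := exists_div hGB hred hfI hf0
  obtain ⟨a, u, v, hgeq, hphiuv, hlenuv, hglead, hltuv⟩ := struct hGB hred hgG
  rcases hne01.lt_or_gt with hBcase | hAcase
  · -- Case B : the w-monomial is the leading one
    have hlead : leadExp (monoT 𝕂 i z - monoT 𝕂 0 w) = expTY 0 w := by
      rw [← leadExp_neg, neg_sub]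
      exact binom_leadExp hBcase
    rw [hglead, hlead] at hgle
    have ha0 : a = 0 := by
      have h := Finsupp.le_def.mp hgle 0
      rw [expTY_apply, expTY_apply] at h
      simpa using h
    subst ha0
    have huw : ∀ m, u m ≤ w m := fun m => by
      have h := Finsupp.le_def.mp hgle m.succ
      rw [expTY_apply, expTY_apply] at h
      simpa using h
    have hgen : monoY 𝕂 u - monoY 𝕂 v ∈ idealJ 𝕂 G j :=
      Ideal.subset_span ⟨u, v, 0, Nat.zero_le j, hgeq ▸ hgG, rfl⟩
    have hwu : (fun m => w m - u m) + u = w := by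
      funext m
      have h := huw m
      show w m - u m + u m = w m
      omega
    have hsplit : monoY 𝕂 z - monoY 𝕂 w
        = (monoY 𝕂 z - monoY 𝕂 ((fun m => w m - u m) + v))
          - monoY 𝕂 (fun m => w m - u m) * (monoY 𝕂 u - monoY 𝕂 v) := by
      rw [mul_sub, monoY_mul, monoY_mul, hwu]
      ring
    rw [hsplit]
    refine sub_mem ?_ (Ideal.mul_mem_left _ _ hgen)
    have hphiw' : phi α z = phi α ((fun m => w m - u m) + v) := by
      rw [phi_add, ← hphiuv, ← phi_add, hwu, hphi]
    have hlenw' : len z + i = len ((fun m => w m - u m) + v) := by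
      rw [len_add]
      have h1 : len (fun m => w m - u m) + len u = len w := by rw [← len_add, hwu]
      omega
    refine IH (max (toLex (expTY i z)) (toLex (expTY 0 ((fun m => w m - u m) + v)))) ?_
      i z _ le_rfl hphiw' hlenw' hij
    have hlt1 : toLex (expTY 0 ((fun m => w m - u m) + v)) < toLex (expTY 0 w) := by
      have hc1 : expTY 0 (fun m => w m - u m) + expTY 0 v
          = expTY 0 ((fun m => w m - u m) + v) := by rw [expTY_add]
      have hc2 : expTY 0 (fun m => w m - u m) + expTY 0 u = expTY 0 w := by
        rw [expTY_add, hwu]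
      rw [← hc1, ← hc2, toLex_add, toLex_add]
      exact add_lt_add_right hltuv _
    calc max (toLex (expTY i z)) (toLex (expTY 0 ((fun m => w m - u m) + v)))
        < toLex (expTY 0 w) := max_lt hBcase hlt1
      _ ≤ ν := le_trans (le_max_right _ _) hμ
  · -- Case A : the z-monomial is the leading one
    have hlead : leadExp (monoT 𝕂 i z - monoT 𝕂 0 w) = expTY i z := binom_leadExp hAcase
    rw [hglead, hlead] at hgle
    have hai : a ≤ i := by
      have h := Finsupp.le_def.mp hgle 0
      rw [expTY_apply, expTY_apply] at h
      simpa using h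
    have huz : ∀ m, u m ≤ z m := fun m => by
      have h := Finsupp.le_def.mp hgle m.succ
      rw [expTY_apply, expTY_apply] at h
      simpa using h
    have hgen : monoY 𝕂 u - monoY 𝕂 v ∈ idealJ 𝕂 G j :=
      Ideal.subset_span ⟨u, v, a, le_trans hai hij, hgeq ▸ hgG, rfl⟩
    have hzu : (fun m => z m - u m) + u = z := by
      funext m
      have h := huz m
      show z m - u m + u m = z m
      omega
    have hsplit : monoY 𝕂 z - monoY 𝕂 w
        = monoY 𝕂 (fun m => z m - u m) * (monoY 𝕂 u - monoY 𝕂 v)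
          + (monoY 𝕂 ((fun m => z m - u m) + v) - monoY 𝕂 w) := by
      rw [mul_sub, monoY_mul, monoY_mul, hzu]
      ring
    rw [hsplit]
    refine add_mem (Ideal.mul_mem_left _ _ hgen) ?_
    have hphiz' : phi α ((fun m => z m - u m) + v) = phi α w := by
      rw [phi_add, ← hphiuv, ← phi_add, hzu, hphi]
    have hlenz' : len ((fun m => z m - u m) + v) + (i - a) = len w := by
      rw [len_add]
      have h1 : len (fun m => z m - u m) + len u = len z := by rw [← len_add, hzu]
      omega
    refine IH (max (toLex (expTY (i - a) ((fun m => z m - u m) + v))) (toLex (expTY 0 w))) ?_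
      (i - a) _ w le_rfl hphiz' hlenz' (by omega)
    have hlt1 : toLex (expTY (i - a) ((fun m => z m - u m) + v)) < toLex (expTY i z) := by
      have hc1 : expTY (i - a) (fun m => z m - u m) + expTY 0 v
          = expTY (i - a) ((fun m => z m - u m) + v) := by rw [expTY_add]; norm_num
      have hc2 : expTY (i - a) (fun m => z m - u m) + expTY a u = expTY i z := by
        rw [expTY_add, hzu]
        congr 1
        omega
      rw [← hc1, ← hc2, toLex_add, toLex_add]
      exact add_lt_add_right hltuv _
    calc max (toLex (expTY (i - a) ((fun m => z m - u m) + v))) (toLex (expTY 0 w))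
        < toLex (expTY i z) := max_lt hlt1 hAcase
      _ ≤ ν := le_trans (le_max_left _ _) hμ

end Aux5


/-- If `G` is a reduced Gröbner basis of `I_{Γ_H}` w.r.t. the lex order with `t`
greatest, then for every `j ≥ 0` the ideal
`J_j = ⟨y^z − y^w : t^i y^z − y^w ∈ G for some i ≤ j⟩` equals `I_j`. -/
theorem stmt5 (𝕂 : Type*) [Field 𝕂] {d k : ℕ} (α : Fin k → Fin d → ℕ)
    (hne : ∀ i, α i ≠ 0)
    (hmin : ∀ i, α i ∉ AddSubmonoid.closure (α '' {j | j ≠ i}))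
    (G : Set (MvPolynomial (Fin (k + 1)) 𝕂))
    (hGB : IsGroebnerBasis (idealGH 𝕂 α) G)
    (hred : IsReducedGB G) :
    ∀ j : ℕ,
      Ideal.span {f : MvPolynomial (Fin k) 𝕂 | ∃ z w : Fin k → ℕ, ∃ i ≤ j,
          monoT 𝕂 i z - monoT 𝕂 0 w ∈ G ∧ f = monoY 𝕂 z - monoY 𝕂 w} =
        idealI 𝕂 α j := by
  intro j
  show idealJ 𝕂 G j = idealI 𝕂 α j
  apply le_antisymm
  · rw [idealJ, Ideal.span_le]
    rintro f ⟨z, w, i, hij, hG, rfl⟩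
    rw [SetLike.mem_coe]
    by_cases hzw : expTY i z = expTY 0 w
    · have hz : z = w := by
        funext m
        have h := DFunLike.congr_fun hzw m.succ
        rw [expTY_apply, expTY_apply] at h
        simpa using h
      rw [hz, sub_self]
      exact zero_mem _
    · have hker := psi_idealGH α (hGB.1 hG)
      rw [map_sub, monoT, monoT, psi_monomial, psi_monomial, sub_eq_zero] at hker
      have hpsiE : psiE α (expTY i z) = psiE α (expTY 0 w) :=
        (AddMonoidAlgebra.single_left_inj (one_ne_zero (α := 𝕂))).mp hker
      rw [psiE_expTY, psiE_expTY, Prod.mk.injEq] at hpsiE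
      obtain ⟨hlen, hphi⟩ := hpsiE
      refine Ideal.subset_span ⟨z, w, hphi, ?_, rfl⟩
      unfold Nat.dist
      omega
  · rw [idealI, Ideal.span_le]
    rintro f ⟨z, w, hphi, hdist, rfl⟩
    rw [SetLike.mem_coe]
    unfold Nat.dist at hdist
    rcases le_total (len z) (len w) with h | h
    · exact key hGB hred j _ (len w - len z) z w le_rfl hphi (by omega) (by omega)
    · have hswap : monoY 𝕂 z - monoY 𝕂 w = -(monoY 𝕂 w - monoY 𝕂 z) := by ring
      rw [hswap]
      exact neg_mem (key hGB hred j _ (len z - len w) w z le_rfl hphi.symm (by omega) (by omega))
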